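/- arXiv:1808.04747 — 2 statements merged into one kernel-verified Lean document; each statement's English description precedes it below -/
import Mathlib

section
/- Error estimate for the time-marching iteration: suppose F is concave, let c > 0, let u be the solution of the QVI with switching cost c, and let (u^n)_{n≥0} be the time-marching sequence for switching cost c with pseudo-time parameter ε > 0. Then for any κ ∈ (0, c) and every n ≥ 0 (with the convention 0^0 = 1), 0 ≤ u − u^n ≤ L_κ(1 − μ)^n/μ componentwise, where L_κ = (2‖F(0)‖ + κ)/γ and μ = κ/(κ + εL_κ). -/
open Filter Topology

noncomputable section

/-- A monotone system with constant `γ`: whenever `u i l - v i l` is the (nonnegative)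
maximum of all differences, `F u i l - F v i l ≥ γ (u i l - v i l)`. -/
def IsMonotoneSystem {N d : ℕ} (γ : ℝ)
    (F : (Fin d → Fin N → ℝ) → Fin d → Fin N → ℝ) : Prop :=
  ∀ u v : Fin d → Fin N → ℝ, ∀ i : Fin d, ∀ l : Fin N,
    (∀ (j : Fin d) (k : Fin N), u j k - v j k ≤ u i l - v i l) →
    0 ≤ u i l - v i l →
    γ * (u i l - v i l) ≤ F u i l - F v i l

/-- The intervention operator `(M_i u)_l = max_{j ≠ i} (u j l - c)`. -/
def Mop {N d : ℕ} (c : ℝ) (u : Fin d → Fin N → ℝ) (i : Fin d) (l : Fin N) : ℝ :=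
  ⨆ j : {j : Fin d // j ≠ i}, (u j l - c)

/-- The sup-norm `‖u‖ = max_{i,l} |u i l|`. -/
def supNorm {N d : ℕ} (u : Fin d → Fin N → ℝ) : ℝ :=
  ⨆ p : Fin d × Fin N, |u p.1 p.2|

/-- A penalty function: continuous, non-decreasing, vanishing on `(-∞,0]` and
positive on `(0,∞)`. -/
def IsPenaltyFunction (π : ℝ → ℝ) : Prop :=
  Continuous π ∧ Monotone π ∧ (∀ y : ℝ, y ≤ 0 → π y = 0) ∧ (∀ y : ℝ, 0 < y → 0 < π y)

/-- A concave system: each `F_i` is concave (componentwise). -/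
def IsConcaveSystem {N d : ℕ}
    (F : (Fin d → Fin N → ℝ) → Fin d → Fin N → ℝ) : Prop :=
  ∀ (i : Fin d) (u v : Fin d → Fin N → ℝ) (θ : ℝ), 0 ≤ θ → θ ≤ 1 → ∀ l : Fin N,
    θ * F u i l + (1 - θ) * F v i l ≤ F (fun j k => θ * u j k + (1 - θ) * v j k) i l

lemma aux_nonempty_ne {d : ℕ} (hd : 2 ≤ d) (i : Fin d) : Nonempty {j : Fin d // j ≠ i} := by
  have h : 1 < Fintype.card (Fin d) := by rw [Fintype.card_fin]; omega
  obtain ⟨j, hj⟩ := Fintype.exists_ne_of_one_lt_card h i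
  exact ⟨⟨j, hj⟩⟩

lemma aux_exists_argmax {N d : ℕ} (hN : 1 ≤ N) (hd : 2 ≤ d) (w : Fin d → Fin N → ℝ) :
    ∃ i l, ∀ j k, w j k ≤ w i l := by
  haveI : Nonempty (Fin d) := ⟨⟨0, by omega⟩⟩
  haveI : Nonempty (Fin N) := ⟨⟨0, by omega⟩⟩
  obtain ⟨p, hp⟩ := Finite.exists_max fun p : Fin d × Fin N => w p.1 p.2
  exact ⟨p.1, p.2, fun j k => hp (j, k)⟩

lemma aux_le_mop {N d : ℕ} (c : ℝ) (w : Fin d → Fin N → ℝ) {i j : Fin d} (l : Fin N)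
    (hj : j ≠ i) : w j l - c ≤ Mop c w i l :=
  le_ciSup (f := fun j : {j : Fin d // j ≠ i} => w j.1 l - c)
    (Set.finite_range _).bddAbove (⟨j, hj⟩ : {j : Fin d // j ≠ i})

lemma aux_mop_le {N d : ℕ} (hd : 2 ≤ d) (c : ℝ) (w : Fin d → Fin N → ℝ) (i : Fin d) (l : Fin N)
    {x : ℝ} (h : ∀ j, j ≠ i → w j l - c ≤ x) : Mop c w i l ≤ x := by
  haveI := aux_nonempty_ne hd i
  exact ciSup_le fun j => h j j.2

lemma aux_mop_wit {N d : ℕ} (hd : 2 ≤ d) (c : ℝ) (w : Fin d → Fin N → ℝ) (i : Fin d) (l : Fin N) :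
    ∃ j, j ≠ i ∧ Mop c w i l ≤ w j l - c := by
  haveI := aux_nonempty_ne hd i
  obtain ⟨j, hj⟩ := Finite.exists_max fun j : {j : Fin d // j ≠ i} => w j.1 l - c
  exact ⟨j.1, j.2, ciSup_le hj⟩

lemma aux_abs_le_supNorm {N d : ℕ} (w : Fin d → Fin N → ℝ) (i : Fin d) (l : Fin N) :
    |w i l| ≤ supNorm w :=
  le_ciSup (f := fun p : Fin d × Fin N => |w p.1 p.2|)
    (Set.finite_range _).bddAbove ((i, l) : Fin d × Fin N)

lemma aux_min_zero {X Y : ℝ} (h : min X Y = 0) : 0 ≤ X ∧ 0 ≤ Y ∧ (X = 0 ∨ Y = 0) := by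
  rcases le_total X Y with hle | hle
  · rw [min_eq_left hle] at h
    exact ⟨le_of_eq h.symm, by linarith, Or.inl h⟩
  · rw [min_eq_right hle] at h
    exact ⟨by linarith, le_of_eq h.symm, Or.inr h⟩

set_option maxHeartbeats 1000000

/-- Error estimate for the time-marching iteration with pseudo-time parameter `ε`. -/
theorem time_marching_error {N d : ℕ} (hN : 1 ≤ N) (hd : 2 ≤ d)
    (γ : ℝ) (hγ : 0 < γ)
    (F : (Fin d → Fin N → ℝ) → Fin d → Fin N → ℝ)
    (hFcont : Continuous F) (hFmono : IsMonotoneSystem γ F)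
    (hFconc : IsConcaveSystem F)
    (c : ℝ) (hc : 0 < c) (ε : ℝ) (hε : 0 < ε)
    (u : Fin d → Fin N → ℝ)
    (hu : ∀ i l, min (F u i l) (u i l - Mop c u i l) = 0)
    (U : ℕ → Fin d → Fin N → ℝ)
    (hU0 : ∀ i l, F (U 0) i l = 0)
    (hUn : ∀ m : ℕ, ∀ i l,
      min (F (U (m + 1)) i l)
        (U (m + 1) i l - Mop c (U (m + 1)) i l + ε * (U (m + 1) i l - U m i l)) = 0)
    (κ : ℝ) (hκ0 : 0 < κ) (hκc : κ < c) :
    ∀ n : ℕ, ∀ i l,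
      0 ≤ u i l - U n i l ∧
      u i l - U n i l ≤
        (2 * supNorm (F 0) + κ) / γ *
          (1 - κ / (κ + ε * ((2 * supNorm (F 0) + κ) / γ))) ^ n /
          (κ / (κ + ε * ((2 * supNorm (F 0) + κ) / γ))) := by
  haveI : Nonempty (Fin d) := ⟨⟨0, by omega⟩⟩
  haveI : Nonempty (Fin N) := ⟨⟨0, by omega⟩⟩
  -- constants
  obtain ⟨A, hAdef⟩ : ∃ x : ℝ, supNorm (F 0) = x := ⟨_, rfl⟩
  simp only [hAdef]
  have hNa : ∀ i l, |F 0 i l| ≤ A := by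
    intro i l; rw [← hAdef]; exact aux_abs_le_supNorm (F 0) i l
  have hA0 : 0 ≤ A := le_trans (abs_nonneg _)
    (hNa ⟨0, by omega⟩ ⟨0, by omega⟩)
  obtain ⟨a, hadef⟩ : ∃ x : ℝ, A / γ = x := ⟨_, rfl⟩
  have ha0 : 0 ≤ a := by rw [← hadef]; exact div_nonneg hA0 hγ.le
  have hγa : γ * a = A := by rw [← hadef]; field_simp
  obtain ⟨L, hLdef⟩ : ∃ x : ℝ, (2 * A + κ) / γ = x := ⟨_, rfl⟩
  simp only [hLdef]
  have hL : 0 < L := by rw [← hLdef]; exact div_pos (by linarith) hγ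
  have haL : 2 * a ≤ L := by
    have h1 : 2 * a * γ = 2 * A := by rw [← hadef]; field_simp
    have h2 : L * γ = 2 * A + κ := by rw [← hLdef]; field_simp
    by_contra hcon
    push_neg at hcon
    have : (2 * a - L) * γ > 0 := mul_pos (by linarith) hγ
    nlinarith
  obtain ⟨μ, hμdef⟩ : ∃ x : ℝ, κ / (κ + ε * L) = x := ⟨_, rfl⟩
  simp only [hμdef]
  have hden : 0 < κ + ε * L := by nlinarith [mul_pos hε hL]
  have hμ0 : 0 < μ := by rw [← hμdef]; exact div_pos hκ0 hden
  have hμ1 : μ < 1 := by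
    rw [← hμdef, div_lt_one hden]; nlinarith [mul_pos hε hL]
  have h1μ : 0 < 1 - μ := by linarith
  have hkey : ε * μ * L = κ * (1 - μ) := by
    rw [← hμdef]; field_simp; ring
  obtain ⟨T, hTdef⟩ : ∃ T : ℕ → ℝ, T = fun n => L * (1 - μ) ^ n / μ := ⟨_, rfl⟩
  have hTn : ∀ n, T n = L * (1 - μ) ^ n / μ := fun n => by rw [hTdef]
  have hTpos : ∀ n, 0 < T n := fun n => by
    rw [hTn]; exact div_pos (mul_pos hL (pow_pos h1μ n)) hμ0
  have hTrec : ∀ n, T (n + 1) = (1 - μ) * T n := by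
    intro n; rw [hTn, hTn, pow_succ]; ring
  have hT0 : 2 * a ≤ T 0 := by
    have ht : T 0 = L / μ := by rw [hTn]; simp
    rw [ht]
    have hLL : L ≤ L / μ := by
      rw [le_div_iff₀ hμ0]; nlinarith
    linarith
  obtain ⟨Q, hQdef⟩ : ∃ x : ℝ, κ / (L * c) = x := ⟨_, rfl⟩
  have hQ0 : 0 ≤ Q := by rw [← hQdef]; exact div_nonneg hκ0.le (mul_pos hL hc).le
  have h2aQ : 2 * a * Q ≤ 1 := by
    rw [← hQdef, show 2 * a * (κ / (L * c)) = 2 * a * κ / (L * c) by ring,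
      div_le_one (mul_pos hL hc)]
    nlinarith [mul_nonneg (sub_nonneg.2 haL) hκ0.le, mul_nonneg hL.le (sub_nonneg.2 hκc.le)]
  obtain ⟨η, hηdef⟩ : ∃ f : ℕ → ℝ, f = fun n => if n = 0 then 0 else Q * T n := ⟨_, rfl⟩
  obtain ⟨s, hsdef⟩ : ∃ f : ℕ → ℝ,
      f = fun n => (if n = 0 then 2 * a else T n) - 2 * a * η n := ⟨_, rfl⟩
  have hη0 : η 0 = 0 := by rw [hηdef]; simp
  have hηn : ∀ n, η (n + 1) = Q * T (n + 1) := by intro n; rw [hηdef]; simp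
  have hs0 : s 0 = 2 * a := by rw [hsdef]; simp [hη0]
  have hsn : ∀ n, s (n + 1) = T (n + 1) - 2 * a * (Q * T (n + 1)) := by
    intro n; rw [hsdef]; simp [hηn]
  have hηnn : ∀ n, 0 ≤ η n := by
    intro n
    cases n with
    | zero => rw [hη0]
    | succ m => rw [hηn]; exact mul_nonneg hQ0 (hTpos _).le
  have hsnn : ∀ n, 0 ≤ s n := by
    intro n
    cases n with
    | zero => rw [hs0]; linarith
    | succ m =>
      rw [hsn]
      nlinarith [mul_nonneg (hTpos (m + 1)).le (sub_nonneg.2 h2aQ)]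
  have hBle : ∀ n, 2 * a * η n + s n ≤ T n := by
    intro n
    cases n with
    | zero => rw [hη0, hs0]; linarith [hT0]
    | succ m => rw [hηn, hsn]; linarith
  -- the schedule inequality
  have hSched : ∀ n (x : ℝ), -a ≤ x → x ≤ a →
      ε * (((1 + η (n + 1)) * x - η (n + 1) * a - s (n + 1))
        - ((1 + η n) * x - η n * a - s n)) ≤ η (n + 1) * c := by
    intro n x hx1 hx2
    cases n with
    | zero =>
      show ε * (((1 + η (0 + 1)) * x - η (0 + 1) * a - s (0 + 1))
        - ((1 + η 0) * x - η 0 * a - s 0)) ≤ η (0 + 1) * c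
      norm_num
      rw [hηn 0, hη0, hsn 0, hs0]
      norm_num
      have hQT1c : Q * T 1 * c = ε * L := by
        have ht1 : T 1 = L * (1 - μ) / μ := by rw [hTn]; simp
        rw [← hQdef, ht1]
        field_simp
        linear_combination hkey.symm
      have hp1 : 0 ≤ ε * (Q * T 1) * (a - x) := by
        apply mul_nonneg (mul_nonneg hε.le (mul_nonneg hQ0 (hTpos 1).le)); linarith
      have hs1nn : 0 ≤ T 1 - 2 * a * (Q * T 1) := by
        nlinarith [mul_nonneg (hTpos 1).le (sub_nonneg.2 h2aQ)]
      have hp2 : ε * (2 * a - (T 1 - 2 * a * (Q * T 1))) ≤ ε * L := by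
        apply mul_le_mul_of_nonneg_left _ hε.le; linarith
      nlinarith [hp1, hp2, hQT1c]
    | succ m =>
      rw [hηn (m + 1), hηn m, hsn (m + 1), hsn m]
      have hkey2 : ε * (((1 + Q * T (m + 1 + 1)) * x - Q * T (m + 1 + 1) * a
            - (T (m + 1 + 1) - 2 * a * (Q * T (m + 1 + 1))))
          - ((1 + Q * T (m + 1)) * x - Q * T (m + 1) * a
            - (T (m + 1) - 2 * a * (Q * T (m + 1)))))
          = ε * ((T (m + 1) - T (m + 1 + 1)) * (Q * (a - x) + 1 - 2 * a * Q)) := by ring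
      rw [hkey2]
      have hd12 : T (m + 1) - T (m + 1 + 1) = μ * T (m + 1) := by
        rw [hTrec (m + 1)]; ring
      rw [hd12]
      have hμt : 0 ≤ μ * T (m + 1) := mul_nonneg hμ0.le (hTpos (m + 1)).le
      have hbr : Q * (a - x) + 1 - 2 * a * Q ≤ 1 := by
        nlinarith [mul_le_mul_of_nonneg_left (show a - x ≤ 2 * a by linarith) hQ0]
      have hstep : ε * (μ * T (m + 1) * (Q * (a - x) + 1 - 2 * a * Q)) ≤ ε * (μ * T (m + 1)) := by
        apply mul_le_mul_of_nonneg_left _ hε.le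
        nlinarith [mul_le_mul_of_nonneg_left hbr hμt]
      have hRHS : Q * T (m + 1 + 1) * c = ε * (μ * T (m + 1)) := by
        rw [hTrec (m + 1), ← hQdef]
        field_simp
        linear_combination T (m + 1) * hkey.symm
      linarith [hstep, hRHS]
  -- basic facts from the equations
  have huF : ∀ i l, 0 ≤ F u i l := fun i l => (aux_min_zero (hu i l)).1
  have huO : ∀ i l, Mop c u i l ≤ u i l := fun i l => by
    linarith [(aux_min_zero (hu i l)).2.1]
  have huCase : ∀ i l, F u i l = 0 ∨ u i l = Mop c u i l := by
    intro i l
    rcases (aux_min_zero (hu i l)).2.2 with h | h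
    · exact Or.inl h
    · exact Or.inr (by linarith)
  have hUF : ∀ m i l, 0 ≤ F (U (m + 1)) i l := fun m i l => (aux_min_zero (hUn m i l)).1
  have hUB : ∀ m i l,
      0 ≤ U (m + 1) i l - Mop c (U (m + 1)) i l + ε * (U (m + 1) i l - U m i l) :=
    fun m i l => (aux_min_zero (hUn m i l)).2.1
  have hUCase : ∀ m i l, F (U (m + 1)) i l = 0 ∨
      U (m + 1) i l - Mop c (U (m + 1)) i l + ε * (U (m + 1) i l - U m i l) = 0 :=
    fun m i l => (aux_min_zero (hUn m i l)).2.2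
  -- monotone consequences
  have hshift : ∀ (w : Fin d → Fin N → ℝ) (t : ℝ), 0 ≤ t → ∀ i l,
      γ * t ≤ F w i l - F (fun j k => w j k - t) i l := by
    intro w t ht i l
    have h := hFmono w (fun j k => w j k - t) i l
      (fun j k => by
        show w j k - (w j k - t) ≤ w i l - (w i l - t)
        have : w j k - (w j k - t) = w i l - (w i l - t) := by ring
        exact le_of_eq this)
      (by show (0:ℝ) ≤ w i l - (w i l - t); linarith)
    calc γ * t = γ * (w i l - (w i l - t)) := by ring
      _ ≤ _ := h
  have hFa : ∀ i l, 0 ≤ F (fun _ _ => a) i l := by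
    intro i l
    have h := hFmono (fun _ _ => a) 0 i l (fun j k => by simp) (by simpa using ha0)
    have h' : γ * a ≤ F (fun _ _ => a) i l - F 0 i l := by simpa using h
    have h2 := abs_le.1 (hNa i l)
    linarith [h2.1]
  have hFnega : ∀ i l, F (fun _ _ => -a) i l ≤ 0 := by
    intro i l
    have h := hFmono 0 (fun _ _ => -a) i l (fun j k => by simp) (by simpa using ha0)
    have h' : γ * a ≤ F 0 i l - F (fun _ _ => -a) i l := by simpa using h
    have h2 := abs_le.1 (hNa i l)
    linarith [h2.2]
  -- bounds on u and U 0
  have hua : ∀ i l, u i l ≤ a := by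
    obtain ⟨i₀, l₀, hmax⟩ := aux_exists_argmax hN hd u
    have key : u i₀ l₀ ≤ a := by
      rcases le_or_gt (u i₀ l₀) 0 with h0 | h0
      · linarith
      · have hmle : Mop c u i₀ l₀ ≤ u i₀ l₀ - c :=
          aux_mop_le hd c u i₀ l₀ (fun j _ => by linarith [hmax j l₀])
        have hFu0 : F u i₀ l₀ = 0 := by
          rcases huCase i₀ l₀ with h | h
          · exact h
          · exfalso; linarith
        have h := hFmono u 0 i₀ l₀ (fun j k => by simpa using hmax j k) (by simpa using h0.le)
        have h' : γ * u i₀ l₀ ≤ F u i₀ l₀ - F 0 i₀ l₀ := by simpa using h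
        have h2 := abs_le.1 (hNa i₀ l₀)
        rw [hFu0] at h'
        by_contra hcc
        push_neg at hcc
        have := mul_lt_mul_of_pos_left hcc hγ
        linarith [h2.1]
    exact fun i l => le_trans (hmax i l) key
  have hU0low : ∀ i l, -a ≤ U 0 i l := by
    obtain ⟨i₀, l₀, hmax⟩ := aux_exists_argmax hN hd (fun i l => -(U 0 i l))
    have hmax' : ∀ j k, -(U 0 j k) ≤ -(U 0 i₀ l₀) := fun j k => hmax j k
    have key : -a ≤ U 0 i₀ l₀ := by
      by_contra hcc
      push_neg at hcc
      have h := hFmono (fun _ _ => -a) (U 0) i₀ l₀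
        (fun j k => by
          show -a - U 0 j k ≤ -a - U 0 i₀ l₀
          linarith [hmax' j k])
        (by show (0:ℝ) ≤ -a - U 0 i₀ l₀; linarith)
      have h' : γ * (-a - U 0 i₀ l₀) ≤ F (fun _ _ => -a) i₀ l₀ - F (U 0) i₀ l₀ := h
      have h2 := hFnega i₀ l₀
      have h3 := hU0 i₀ l₀
      have h4 := mul_pos hγ (show (0:ℝ) < -a - U 0 i₀ l₀ by linarith)
      linarith
    intro i l; linarith [hmax' i l]
  -- U n ≤ u
  have hUle : ∀ n i l, U n i l ≤ u i l := by
    intro n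
    induction n with
    | zero =>
      obtain ⟨i₀, l₀, hmax⟩ := aux_exists_argmax hN hd (fun i l => U 0 i l - u i l)
      have hmax' : ∀ j k, U 0 j k - u j k ≤ U 0 i₀ l₀ - u i₀ l₀ := fun j k => hmax j k
      suffices h : U 0 i₀ l₀ - u i₀ l₀ ≤ 0 by intro i l; linarith [hmax' i l]
      by_contra hcc
      push_neg at hcc
      have h := hFmono (U 0) u i₀ l₀ hmax' hcc.le
      rw [hU0 i₀ l₀] at h
      have := mul_pos hγ hcc
      linarith [huF i₀ l₀]
    | succ n ih =>
      obtain ⟨i₀, l₀, hmax⟩ := aux_exists_argmax hN hd (fun i l => U (n + 1) i l - u i l)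
      have hmax' : ∀ j k, U (n + 1) j k - u j k ≤ U (n + 1) i₀ l₀ - u i₀ l₀ :=
        fun j k => hmax j k
      suffices h : U (n + 1) i₀ l₀ - u i₀ l₀ ≤ 0 by intro i l; linarith [hmax' i l]
      by_contra hcc
      push_neg at hcc
      rcases hUCase n i₀ l₀ with hF | hB
      · have h := hFmono (U (n + 1)) u i₀ l₀ hmax' hcc.le
        rw [hF] at h
        have := mul_pos hγ hcc
        linarith [huF i₀ l₀]
      · have hM : Mop c (U (n + 1)) i₀ l₀ ≤ Mop c u i₀ l₀ + (U (n + 1) i₀ l₀ - u i₀ l₀) := by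
          apply aux_mop_le hd
          intro j hj
          have h1 := aux_le_mop c u l₀ hj
          linarith [hmax' j l₀]
        have hMu := huO i₀ l₀
        have hp : ε * (U (n + 1) i₀ l₀ - u i₀ l₀) ≤ ε * (U (n + 1) i₀ l₀ - U n i₀ l₀) :=
          mul_le_mul_of_nonneg_left (by linarith [ih i₀ l₀]) hε.le
        have hδ := mul_pos hε hcc
        linarith [hB, hM, hMu, hp, hδ]
  have hulow : ∀ i l, -a ≤ u i l := fun i l => le_trans (hU0low i l) (hUle 0 i l)
  -- the subsolution envelope
  have hinv : ∀ n i l, (1 + η n) * u i l - η n * a - s n ≤ U n i l := by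
    intro n
    induction n with
    | zero =>
      intro i l
      rw [hη0, hs0]
      have h1 := hua i l
      have h2 := hU0low i l
      linarith
    | succ n ih =>
      obtain ⟨i₀, l₀, hmax⟩ := aux_exists_argmax hN hd
        (fun i l => (1 + η (n + 1)) * u i l - η (n + 1) * a - s (n + 1) - U (n + 1) i l)
      have hmax' : ∀ j k, (1 + η (n + 1)) * u j k - η (n + 1) * a - s (n + 1) - U (n + 1) j k ≤
          (1 + η (n + 1)) * u i₀ l₀ - η (n + 1) * a - s (n + 1) - U (n + 1) i₀ l₀ :=
        fun j k => hmax j k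
      suffices key : (1 + η (n + 1)) * u i₀ l₀ - η (n + 1) * a - s (n + 1)
          - U (n + 1) i₀ l₀ ≤ 0 by
        intro i l; linarith [hmax' i l]
      by_contra hcc
      push_neg at hcc
      have hηnn' : 0 ≤ η (n + 1) := hηnn (n + 1)
      have hsnn' : 0 ≤ s (n + 1) := hsnn (n + 1)
      have h1η : (0:ℝ) < 1 + η (n + 1) := by linarith
      rcases huCase i₀ l₀ with hFu | hOu
      · -- F-branch active for u at the max point
        have hθ0 : (0:ℝ) ≤ 1 / (1 + η (n + 1)) := by positivity
        have hθpos : (0:ℝ) < 1 / (1 + η (n + 1)) := by positivity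
        have hθ1 : 1 / (1 + η (n + 1)) ≤ 1 := by
          rw [div_le_one h1η]; linarith
        have heq : (fun j k => (1 / (1 + η (n + 1))) * ((1 + η (n + 1)) * u j k - η (n + 1) * a)
            + (1 - 1 / (1 + η (n + 1))) * a) = u := by
          funext j k
          field_simp
          ring
        have hconc : (1 / (1 + η (n + 1)))
              * F (fun j k => (1 + η (n + 1)) * u j k - η (n + 1) * a) i₀ l₀
            + (1 - 1 / (1 + η (n + 1))) * F (fun _ _ => a) i₀ l₀
            ≤ F (fun j k => (1 / (1 + η (n + 1))) * ((1 + η (n + 1)) * u j k - η (n + 1) * a)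
                + (1 - 1 / (1 + η (n + 1))) * a) i₀ l₀ :=
          hFconc i₀ (fun j k => (1 + η (n + 1)) * u j k - η (n + 1) * a) (fun _ _ => a)
            (1 / (1 + η (n + 1))) hθ0 hθ1 l₀
        rw [heq, hFu] at hconc
        have hFub : F (fun j k => (1 + η (n + 1)) * u j k - η (n + 1) * a) i₀ l₀ ≤ 0 := by
          by_contra hpp
          push_neg at hpp
          have hh1 := mul_pos hθpos hpp
          have hh2 := mul_nonneg (sub_nonneg.2 hθ1) (hFa i₀ l₀)
          linarith
        have hsh : γ * s (n + 1) ≤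
            F (fun j k => (1 + η (n + 1)) * u j k - η (n + 1) * a) i₀ l₀
            - F (fun j k => (1 + η (n + 1)) * u j k - η (n + 1) * a - s (n + 1)) i₀ l₀ :=
          hshift (fun j k => (1 + η (n + 1)) * u j k - η (n + 1) * a) (s (n + 1)) hsnn' i₀ l₀
        have hmono : γ * ((1 + η (n + 1)) * u i₀ l₀ - η (n + 1) * a - s (n + 1)
              - U (n + 1) i₀ l₀) ≤
            F (fun j k => (1 + η (n + 1)) * u j k - η (n + 1) * a - s (n + 1)) i₀ l₀
            - F (U (n + 1)) i₀ l₀ :=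
          hFmono (fun j k => (1 + η (n + 1)) * u j k - η (n + 1) * a - s (n + 1)) (U (n + 1))
            i₀ l₀ (fun j k => hmax' j k) hcc.le
        have hγδ := mul_pos hγ hcc
        have hγs := mul_nonneg hγ.le hsnn'
        linarith [hUF n i₀ l₀]
      · -- obstacle-branch active for u at the max point
        obtain ⟨j₀, hj₀, hwit⟩ := aux_mop_wit hd c u i₀ l₀
        have hjl : u i₀ l₀ + c ≤ u j₀ l₀ := by
          rw [hOu]; linarith
        have hMψ1 : (1 + η (n + 1)) * u j₀ l₀ - η (n + 1) * a - s (n + 1) - c ≤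
            Mop c (fun j k => (1 + η (n + 1)) * u j k - η (n + 1) * a - s (n + 1)) i₀ l₀ :=
          aux_le_mop c (fun j k => (1 + η (n + 1)) * u j k - η (n + 1) * a - s (n + 1)) l₀ hj₀
        have hMψ2 : Mop c (fun j k => (1 + η (n + 1)) * u j k - η (n + 1) * a - s (n + 1)) i₀ l₀
            ≤ Mop c (U (n + 1)) i₀ l₀
              + ((1 + η (n + 1)) * u i₀ l₀ - η (n + 1) * a - s (n + 1) - U (n + 1) i₀ l₀) := by
          apply aux_mop_le hd
          intro j hj
          have h1 := aux_le_mop c (U (n + 1)) l₀ hj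
          have h2 := hmax' j l₀
          show (1 + η (n + 1)) * u j l₀ - η (n + 1) * a - s (n + 1) - c ≤ _
          linarith
        have hψj : (1 + η (n + 1)) * u i₀ l₀ - η (n + 1) * a - s (n + 1) + η (n + 1) * c ≤
            (1 + η (n + 1)) * u j₀ l₀ - η (n + 1) * a - s (n + 1) - c := by
          have hm := mul_le_mul_of_nonneg_left hjl h1η.le
          nlinarith
        have hBB := hUB n i₀ l₀
        have hprev := ih i₀ l₀
        have hsch := hSched n (u i₀ l₀) (hulow i₀ l₀) (hua i₀ l₀)
        have hδε : 0 < ε * ((1 + η (n + 1)) * u i₀ l₀ - η (n + 1) * a - s (n + 1)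
            - U (n + 1) i₀ l₀) := mul_pos hε hcc
        have hE2 : ε * (U (n + 1) i₀ l₀ - U n i₀ l₀) ≤
            ε * ((((1 + η (n + 1)) * u i₀ l₀ - η (n + 1) * a - s (n + 1))
                - ((1 + η n) * u i₀ l₀ - η n * a - s n))
              - ((1 + η (n + 1)) * u i₀ l₀ - η (n + 1) * a - s (n + 1) - U (n + 1) i₀ l₀)) :=
          mul_le_mul_of_nonneg_left (by linarith) hε.le
        have hE3 : ε * ((((1 + η (n + 1)) * u i₀ l₀ - η (n + 1) * a - s (n + 1))
                - ((1 + η n) * u i₀ l₀ - η n * a - s n))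
              - ((1 + η (n + 1)) * u i₀ l₀ - η (n + 1) * a - s (n + 1) - U (n + 1) i₀ l₀))
            = ε * (((1 + η (n + 1)) * u i₀ l₀ - η (n + 1) * a - s (n + 1))
                - ((1 + η n) * u i₀ l₀ - η n * a - s n))
              - ε * ((1 + η (n + 1)) * u i₀ l₀ - η (n + 1) * a - s (n + 1)
                - U (n + 1) i₀ l₀) := by ring
        linarith [hMψ1, hMψ2, hψj, hBB, hsch, hδε, hE2, hE3]
  -- conclusion
  intro n i l
  refine ⟨by linarith [hUle n i l], ?_⟩
  have h1 := hinv n i l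
  have h2 : η n * (a - u i l) ≤ η n * (2 * a) :=
    mul_le_mul_of_nonneg_left (by linarith [hulow i l]) (hηnn n)
  have h3 := hBle n
  have hfin : u i l - U n i l ≤ T n := by nlinarith [h1, h2, h3]
  rw [hTn] at hfin
  exact hfin
end
end

section
/- Error between the iterated optimal stopping sequence and the penalized iteration: let c > 0 and ρ > 0, let (u^n)_{n≥0} be the iterated optimal stopping sequence and (u^{ρ,n})_{n≥0} the penalized iteration, both for switching cost c. Suppose there exist constants τ > 0 and σ > 0 such that π(y) ≥ τ·y^{1/σ} for all 0 ≤ y ≤ 2‖F(0)‖/γ. Then ‖u^n − u^{ρ,n}‖ ≤ (C/(τρ))^σ · n for all n ≥ 0, where C = sup over {v ∈ ℝ^{N×d} : ‖v‖ ≤ ‖F(0)‖/γ} of ‖F(v)‖. -/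
open Filter Topology

noncomputable section

section Helpers

variable {N d : ℕ}

lemma abs_le_supNorm (u : Fin d → Fin N → ℝ) (i : Fin d) (l : Fin N) :
    |u i l| ≤ supNorm u :=
  le_ciSup (f := fun p : Fin d × Fin N => |u p.1 p.2|)
    (Set.Finite.bddAbove (Set.finite_range _)) (⟨i, l⟩ : Fin d × Fin N)

lemma supNorm_le [Nonempty (Fin d)] [Nonempty (Fin N)] {u : Fin d → Fin N → ℝ} {M : ℝ}
    (h : ∀ i l, |u i l| ≤ M) : supNorm u ≤ M :=
  ciSup_le fun p => h p.1 p.2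

lemma continuous_supNorm [Nonempty (Fin d)] [Nonempty (Fin N)] :
    Continuous (supNorm (N := N) (d := d)) := by
  have h : (supNorm (N := N) (d := d)) =
      fun u => Finset.univ.sup' Finset.univ_nonempty
        (fun p : Fin d × Fin N => |u p.1 p.2|) := by
    funext u
    apply le_antisymm
    · exact ciSup_le fun p =>
        Finset.le_sup' (fun p : Fin d × Fin N => |u p.1 p.2|) (Finset.mem_univ p)
    · exact Finset.sup'_le _ _ fun p _ => abs_le_supNorm u p.1 p.2
  rw [h]
  exact Continuous.finset_sup'_apply Finset.univ_nonempty fun p _ =>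
    ((continuous_apply p.2).comp (continuous_apply p.1)).abs

end Helpers

/-- Error between the iterated optimal stopping sequence and the penalized iteration. -/
theorem iterated_vs_penalized_iteration_error {N d : ℕ} (hN : 1 ≤ N) (hd : 2 ≤ d)
    (γ : ℝ) (hγ : 0 < γ)
    (F : (Fin d → Fin N → ℝ) → Fin d → Fin N → ℝ)
    (hFcont : Continuous F) (hFmono : IsMonotoneSystem γ F)
    (π : ℝ → ℝ) (hπ : IsPenaltyFunction π)
    (c : ℝ) (hc : 0 < c) (ρ : ℝ) (hρ : 0 < ρ)
    (U : ℕ → Fin d → Fin N → ℝ)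
    (hU0 : ∀ i l, F (U 0) i l = 0)
    (hUn : ∀ m : ℕ, ∀ i l, min (F (U (m + 1)) i l) (U (m + 1) i l - Mop c (U m) i l) = 0)
    (V : ℕ → Fin d → Fin N → ℝ)
    (hV0 : ∀ i l, F (V 0) i l = 0)
    (hVn : ∀ n : ℕ, ∀ i l, F (V (n + 1)) i l -
      ρ * ∑ j ∈ Finset.univ.erase i, π (V n j l - c - V (n + 1) i l) = 0)
    (τ σ : ℝ) (hτ : 0 < τ) (hσ : 0 < σ)
    (hπlow : ∀ y : ℝ, 0 ≤ y → y ≤ 2 * supNorm (F 0) / γ → τ * y ^ (1 / σ) ≤ π y) :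
    ∀ n : ℕ,
      supNorm (fun i l => U n i l - V n i l) ≤
        (sSup ((fun v => supNorm (F v)) '' {v | supNorm v ≤ supNorm (F 0) / γ}) / (τ * ρ)) ^ σ
          * n := by
  haveI : Nonempty (Fin N) := Fin.pos_iff_nonempty.mp (by omega)
  haveI : Nonempty (Fin d) := Fin.pos_iff_nonempty.mp (by omega)
  haveI : Nontrivial (Fin d) := Fin.nontrivial_iff_two_le.mpr hd
  obtain ⟨hπc, hπm, hπ0, hπpos⟩ := hπ
  set K : ℝ := supNorm (F 0) / γ with hKdef
  have hsn0 : 0 ≤ supNorm (F 0) :=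
    le_trans (abs_nonneg _) (abs_le_supNorm (F 0) (Classical.arbitrary _) (Classical.arbitrary _))
  have hK0 : 0 ≤ K := div_nonneg hsn0 hγ.le
  have hγK : γ * K = supNorm (F 0) := by
    rw [hKdef]; field_simp
  -- argmax over components
  have hargmax : ∀ f : Fin d → Fin N → ℝ, ∃ i l, ∀ j k, f j k ≤ f i l := by
    intro f
    obtain ⟨p, hp⟩ := Finite.exists_max fun p : Fin d × Fin N => f p.1 p.2
    exact ⟨p.1, p.2, fun j k => hp (j, k)⟩
  -- comparison principle
  have hcomp : ∀ u v : Fin d → Fin N → ℝ,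
      (∀ i l, F u i l ≤ F v i l) → ∀ i l, u i l ≤ v i l := by
    intro u v h i l
    obtain ⟨i0, l0, hmax⟩ := hargmax (fun j k => u j k - v j k)
    have h0 : u i0 l0 - v i0 l0 ≤ 0 := by
      by_contra hpos
      push_neg at hpos
      have h1 := hFmono u v i0 l0 hmax hpos.le
      have h2 := h i0 l0
      nlinarith
    linarith [hmax i l]
  -- π is nonnegative
  have hπnn : ∀ y, 0 ≤ π y := by
    intro y
    rcases le_or_gt y 0 with h | h
    · exact (hπ0 y h).ge
    · exact (hπpos y h).le
  -- nonnegativity of F along the iterations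
  have hFU : ∀ m i l, 0 ≤ F (U (m + 1)) i l :=
    fun m i l => le_trans (hUn m i l).symm.le (min_le_left _ _)
  have hUM : ∀ m i l, Mop c (U m) i l ≤ U (m + 1) i l := by
    intro m i l
    have := le_trans (hUn m i l).symm.le (min_le_right _ _)
    linarith
  have hFVeq : ∀ n i l, F (V (n + 1)) i l =
      ρ * ∑ j ∈ Finset.univ.erase i, π (V n j l - c - V (n + 1) i l) :=
    fun n i l => sub_eq_zero.mp (hVn n i l)
  have hFV : ∀ n i l, 0 ≤ F (V (n + 1)) i l := by
    intro n i l
    rw [hFVeq n i l]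
    exact mul_nonneg hρ.le (Finset.sum_nonneg fun j _ => hπnn _)
  -- Mop facts
  have hMop_le : ∀ (u : Fin d → Fin N → ℝ) (i : Fin d) (l : Fin N) (j : Fin d),
      j ≠ i → u j l - c ≤ Mop c u i l := by
    intro u i l j hj
    exact le_ciSup (f := fun j : {j : Fin d // j ≠ i} => u j l - c)
      (Set.Finite.bddAbove (Set.finite_range _)) ⟨j, hj⟩
  have hMop_ex : ∀ (u : Fin d → Fin N → ℝ) (i : Fin d) (l : Fin N),
      ∃ j, j ≠ i ∧ Mop c u i l = u j l - c := by
    intro u i l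
    haveI : Nonempty {j : Fin d // j ≠ i} := nonempty_subtype.mpr (exists_ne i)
    obtain ⟨j0, hj0⟩ := Finite.exists_max fun j : {j : Fin d // j ≠ i} => u j l - c
    exact ⟨j0, j0.2, le_antisymm (ciSup_le hj0) (hMop_le u i l j0 j0.2)⟩
  -- generic upper bound
  have hub : ∀ w : Fin d → Fin N → ℝ,
      (∀ i l, 0 < F w i l → w i l ≤ K - c) → ∀ i l, w i l ≤ K := by
    intro w hw i l
    obtain ⟨i0, l0, hmax⟩ := hargmax (fun j k => w j k - K)
    have h0 : w i0 l0 - K ≤ 0 := by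
      by_contra hpos
      push_neg at hpos
      have h1 : γ * (w i0 l0 - K) ≤ F w i0 l0 - F (fun _ _ => K) i0 l0 := by
        have := hFmono w (fun _ _ => K) i0 l0 (fun j k => hmax j k) hpos.le
        simpa using this
      have h2 : γ * (K - 0) ≤ F (fun _ _ => K) i0 l0 - F 0 i0 l0 := by
        have := hFmono (fun _ _ => K) 0 i0 l0 (fun j k => by simp) (by simpa using hK0)
        simpa using this
      have hF0 : -(supNorm (F 0)) ≤ F 0 i0 l0 :=
        neg_le_of_neg_le (le_trans (neg_le_abs _) (abs_le_supNorm (F 0) i0 l0))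
      have hFK : 0 ≤ F (fun _ _ => K) i0 l0 := by nlinarith
      have hFw : 0 < F w i0 l0 := by nlinarith
      have := hw i0 l0 hFw
      linarith
    linarith [hmax i l]
  -- generic lower bound
  have hlb : ∀ w : Fin d → Fin N → ℝ,
      (∀ i l, 0 ≤ F w i l) → ∀ i l, -K ≤ w i l := by
    intro w hw i l
    obtain ⟨i0, l0, hmax⟩ := hargmax (fun j k => -K - w j k)
    have h0 : -K - w i0 l0 ≤ 0 := by
      by_contra hpos
      push_neg at hpos
      have h1 : γ * (-K - w i0 l0) ≤ F (fun _ _ => -K) i0 l0 - F w i0 l0 := by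
        have := hFmono (fun _ _ => -K) w i0 l0 (fun j k => hmax j k) hpos.le
        simpa using this
      have h2 : γ * (0 - -K) ≤ F 0 i0 l0 - F (fun _ _ => -K) i0 l0 := by
        have := hFmono 0 (fun _ _ => -K) i0 l0 (fun j k => by simp) (by simpa using hK0)
        simpa using this
      have hF0 : F 0 i0 l0 ≤ supNorm (F 0) :=
        le_trans (le_abs_self _) (abs_le_supNorm (F 0) i0 l0)
      nlinarith [hw i0 l0]
    linarith [hmax i l]
  -- positivity of a penalty term when F (V (n+1)) is positive
  have hpen : ∀ n i l, 0 < F (V (n + 1)) i l →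
      ∃ j, j ≠ i ∧ 0 < V n j l - c - V (n + 1) i l := by
    intro n i l hF
    rw [hFVeq n i l] at hF
    have hsum : ∑ j ∈ Finset.univ.erase i, π (V n j l - c - V (n + 1) i l) ≠ 0 := by
      intro h
      rw [h] at hF
      simp at hF
    obtain ⟨j, hj, hπj⟩ := Finset.exists_ne_zero_of_sum_ne_zero hsum
    refine ⟨j, (Finset.mem_erase.mp hj).1, ?_⟩
    by_contra hy
    push_neg at hy
    exact hπj (hπ0 _ hy)
  -- sup-norm bounds on the iterates
  have hUbd : ∀ n i l, |U n i l| ≤ K := by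
    intro n
    induction n with
    | zero =>
      intro i l
      rw [abs_le]
      refine ⟨hlb (U 0) (fun i l => (hU0 i l).ge) i l,
        hub (U 0) (fun i l h => absurd (hU0 i l) h.ne') i l⟩
    | succ m ih =>
      intro i l
      rw [abs_le]
      refine ⟨hlb _ (hFU m) i l, hub _ ?_ i l⟩
      intro i' l' hF
      have hmin := hUn m i' l'
      rcases le_total (F (U (m + 1)) i' l') (U (m + 1) i' l' - Mop c (U m) i' l') with hle | hle
      · rw [min_eq_left hle] at hmin
        exact absurd hmin hF.ne'
      · rw [min_eq_right hle] at hmin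
        have hUeq : U (m + 1) i' l' = Mop c (U m) i' l' := by linarith [sub_eq_zero.mp hmin]
        rw [hUeq]
        haveI : Nonempty {j : Fin d // j ≠ i'} := nonempty_subtype.mpr (exists_ne i')
        exact ciSup_le fun j => by linarith [(abs_le.mp (ih j.1 l')).2]
  have hVbd : ∀ n i l, |V n i l| ≤ K := by
    intro n
    induction n with
    | zero =>
      intro i l
      rw [abs_le]
      refine ⟨hlb (V 0) (fun i l => (hV0 i l).ge) i l,
        hub (V 0) (fun i l h => absurd (hV0 i l) h.ne') i l⟩
    | succ m ih =>
      intro i l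
      rw [abs_le]
      refine ⟨hlb _ (hFV m) i l, hub _ ?_ i l⟩
      intro i' l' hF
      obtain ⟨j, hj, hy⟩ := hpen m i' l' hF
      have := (abs_le.mp (ih j l')).2
      linarith
  -- V ≤ U
  have hVU : ∀ n i l, V n i l ≤ U n i l := by
    intro n
    induction n with
    | zero => exact hcomp (V 0) (U 0) (fun i l => by rw [hV0, hU0])
    | succ m ih =>
      intro i l
      obtain ⟨i0, l0, hmax⟩ := hargmax (fun j k => V (m + 1) j k - U (m + 1) j k)
      have h0 : V (m + 1) i0 l0 - U (m + 1) i0 l0 ≤ 0 := by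
        by_contra hpos
        push_neg at hpos
        have h1 := hFmono (V (m + 1)) (U (m + 1)) i0 l0 hmax hpos.le
        have hFVpos : 0 < F (V (m + 1)) i0 l0 := by nlinarith [hFU m i0 l0]
        obtain ⟨j, hj, hy⟩ := hpen m i0 l0 hFVpos
        have h2 := hMop_le (U m) i0 l0 j hj
        have h3 := hUM m i0 l0
        have h4 := ih j l0
        linarith
      linarith [hmax i l]
  -- the constant C
  set S : Set (Fin d → Fin N → ℝ) := {v | supNorm v ≤ K} with hSdef
  set C : ℝ := sSup ((fun v => supNorm (F v)) '' S) with hCdef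
  have hSc : IsCompact S := by
    have hS : S = Set.pi Set.univ fun _ : Fin d => Set.pi Set.univ fun _ : Fin N =>
        Set.Icc (-K) K := by
      ext v
      simp only [hSdef, Set.mem_setOf_eq, Set.mem_univ_pi, Set.mem_Icc]
      constructor
      · intro h i l
        exact abs_le.mp (le_trans (abs_le_supNorm v i l) h)
      · intro h
        exact supNorm_le fun i l => abs_le.mpr (h i l)
    rw [hS]
    exact isCompact_univ_pi fun _ => isCompact_univ_pi fun _ => isCompact_Icc
  have hCbdd : BddAbove ((fun v => supNorm (F v)) '' S) :=
    (hSc.image (continuous_supNorm.comp hFcont)).bddAbove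
  have hCmem : ∀ v : Fin d → Fin N → ℝ, supNorm v ≤ K → supNorm (F v) ≤ C :=
    fun v hv => le_csSup hCbdd ⟨v, hv, rfl⟩
  have hC0 : 0 ≤ C := by
    refine le_trans hsn0 (hCmem 0 ?_)
    exact supNorm_le fun i l => by simpa using hK0
  set E : ℝ := (C / (τ * ρ)) ^ σ with hEdef
  have hE0 : 0 ≤ E := Real.rpow_nonneg (div_nonneg hC0 (by positivity)) σ
  -- the key componentwise estimate
  have key : ∀ n i l, U n i l - V n i l ≤ E * n := by
    intro n
    induction n with
    | zero =>
      intro i l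
      have := hcomp (U 0) (V 0) (fun i l => by rw [hU0, hV0]) i l
      simpa using this
    | succ m ih =>
      intro i l
      obtain ⟨i0, l0, hmax⟩ := hargmax fun j k => U (m + 1) j k - V (m + 1) j k
      have hδ0 : 0 ≤ U (m + 1) i0 l0 - V (m + 1) i0 l0 := sub_nonneg.mpr (hVU (m + 1) i0 l0)
      have hEm1 : (0 : ℝ) ≤ E * (m + 1) := by positivity
      have hδle : U (m + 1) i0 l0 - V (m + 1) i0 l0 ≤ E * (m + 1) := by
        have hmin := hUn m i0 l0
        rcases le_total (F (U (m + 1)) i0 l0) (U (m + 1) i0 l0 - Mop c (U m) i0 l0) with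
          hle | hle
        · rw [min_eq_left hle] at hmin
          have h1 := hFmono (U (m + 1)) (V (m + 1)) i0 l0 hmax hδ0
          have h2 := hFV m i0 l0
          have h3 : γ * (U (m + 1) i0 l0 - V (m + 1) i0 l0) ≤ γ * 0 := by
            rw [hmin] at h1; linarith
          have h4 := le_of_mul_le_mul_left h3 hγ
          linarith
        · rw [min_eq_right hle] at hmin
          have hUeq : U (m + 1) i0 l0 = Mop c (U m) i0 l0 := by
            linarith [sub_eq_zero.mp hmin]
          obtain ⟨j, hj, hMj⟩ := hMop_ex (U m) i0 l0
          set y : ℝ := V m j l0 - c - V (m + 1) i0 l0 with hydef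
          have hδy : U (m + 1) i0 l0 - V (m + 1) i0 l0 ≤ y + E * m := by
            have := ih j l0
            rw [hUeq, hMj]
            linarith
          have hyE : y ≤ E := by
            rcases le_or_gt y 0 with hy | hy
            · linarith
            · have h2K : 2 * supNorm (F 0) / γ = 2 * K := by rw [hKdef]; ring
              have hy2K : y ≤ 2 * supNorm (F 0) / γ := by
                rw [h2K]
                have ha := (abs_le.mp (hVbd m j l0)).2
                have hb := (abs_le.mp (hVbd (m + 1) i0 l0)).1
                rw [hydef]
                linarith
              have hπy := hπlow y hy.le hy2K
              have hFVC : F (V (m + 1)) i0 l0 ≤ C := by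
                have h1 := hFmono (U (m + 1)) (V (m + 1)) i0 l0 hmax hδ0
                have h2 : F (U (m + 1)) i0 l0 ≤ C :=
                  le_trans (le_trans (le_abs_self _) (abs_le_supNorm _ i0 l0))
                    (hCmem (U (m + 1)) (supNorm_le (hUbd (m + 1))))
                nlinarith [mul_nonneg hγ.le hδ0]
              have hterm : π y ≤ ∑ j' ∈ Finset.univ.erase i0,
                  π (V m j' l0 - c - V (m + 1) i0 l0) := by
                have hmem : j ∈ Finset.univ.erase i0 :=
                  Finset.mem_erase.mpr ⟨hj, Finset.mem_univ j⟩
                rw [hydef]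
                exact Finset.single_le_sum
                  (f := fun j' => π (V m j' l0 - c - V (m + 1) i0 l0))
                  (fun j' _ => hπnn _) hmem
              have hρπ : ρ * π y ≤ C := by
                have := hFVeq m i0 l0
                nlinarith
              have hπC : π y ≤ C / ρ := (le_div_iff₀ hρ).mpr (by linarith)
              have hyσ : y ^ (1 / σ) ≤ C / (τ * ρ) := by
                rw [div_mul_eq_div_div_swap]
                rw [le_div_iff₀ hτ]
                linarith [hπy, hπC]
              have hyy : y = (y ^ (1 / σ)) ^ σ := by
                rw [← Real.rpow_mul hy.le, one_div_mul_cancel hσ.ne', Real.rpow_one]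
              rw [hEdef, hyy]
              exact Real.rpow_le_rpow (Real.rpow_nonneg hy.le _) hyσ hσ.le
          linarith
      have := hmax i l
      push_cast
      linarith
  intro n
  refine supNorm_le fun i l => ?_
  have h1 : (0 : ℝ) ≤ U n i l - V n i l := sub_nonneg.mpr (hVU n i l)
  calc |U n i l - V n i l| = U n i l - V n i l := abs_of_nonneg h1
    _ ≤ E * n := key n i l
end
end
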